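/- Let N ≥ 1 and Q ≥ 1 be integers. Let 𝒱 be a finite nonempty family of value functions v : Finset (Fin N) → ℝ whose robust core C₀ = ⋂_{v∈𝒱} C(v) is nonempty. Let ℳ be a finite family of maps M : X → X, each a paracontraction with respect to ‖·‖_{2,2}, such that ⋂_{M∈ℳ} fix(M) = C₀^N := {x ∈ X | ∀ i, x_i ∈ C₀}. Let 𝒲 be a finite family of N×N doubly stochastic matrices with strictly positive diagonal entries. Let (M^k)_{k∈ℕ} be a sequence with M^k ∈ ℳ such that for every n ∈ ℕ, {M^n, M^{n+1}, …, M^{n+Q}} = ℳ, and let (W^k)_{k∈ℕ} be a sequence with W^k ∈ 𝒲 such that for every k ∈ ℕ the edge set ⋃_{l=1}^{Q} {(i,j) | W^{k+l}_{ij} > 0} is strongly connected on Fin N. Then for every initial point x⁰ ∈ X, the sequence generated by the bargaining iteration x^{k+1} = M^k(𝑾^k x^k) converges to some x̄ ∈ 𝒜 ∩ C₀^N, i.e., a point with all components equal to a common payoff vector lying in the robust core C₀. -/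

import Mathlib

open scoped BigOperators

noncomputable section

/-- The stacked space `X = Fin N → EuclideanSpace ℝ (Fin N)` with the ℓ²-product norm. -/
abbrev XSp (N : ℕ) := PiLp 2 (fun _ : Fin N => EuclideanSpace ℝ (Fin N))

/-- The core of a TU coalitional game with value function `v`. -/
def core {N : ℕ} (v : Finset (Fin N) → ℝ) : Set (EuclideanSpace ℝ (Fin N)) :=
  {x | ∑ i, x i = v Finset.univ ∧
    ∀ S : Finset (Fin N), S.Nonempty → ∑ i ∈ S, x i ≥ v S}

/-- A matrix is doubly stochastic: nonnegative entries, rows and columns sum to 1. -/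
def DoublyStochastic {N : ℕ} (W : Matrix (Fin N) (Fin N) ℝ) : Prop :=
  (∀ i j, 0 ≤ W i j) ∧ (∀ i, ∑ j, W i j = 1) ∧ (∀ j, ∑ i, W i j = 1)

/-- The averaging map `(𝑾 x)_i = ∑ j, W i j • x j` (Kronecker product `W ⊗ I`). -/
def avgMap {N n : ℕ} (W : Matrix (Fin N) (Fin N) ℝ)
    (x : PiLp 2 fun _ : Fin N => EuclideanSpace ℝ (Fin n)) :
    PiLp 2 fun _ : Fin N => EuclideanSpace ℝ (Fin n) :=
  WithLp.toLp 2 fun i => ∑ j, W i j • x j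

/-- An edge set on `Fin N` is strongly connected. -/
def StronglyConnected {N : ℕ} (E : Set (Fin N × Fin N)) : Prop :=
  ∀ i j : Fin N, Relation.ReflTransGen (fun a b => (a, b) ∈ E) i j

/-- A map is nonexpansive (1-Lipschitz). -/
def Nonexpansive {E : Type*} [NormedAddCommGroup E] (T : E → E) : Prop :=
  ∀ x y, ‖T x - T y‖ ≤ ‖x - y‖

/-- A continuous map `M` is a paracontraction if `‖M x - y‖ < ‖x - y‖` whenever
`x` is not a fixed point of `M` and `y` is a fixed point of `M`. -/
def Paracontraction {E : Type*} [NormedAddCommGroup E] (M : E → E) : Prop :=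
  Continuous M ∧ ∀ x y, M x ≠ x → M y = y → ‖M x - y‖ < ‖x - y‖

open Filter Topology

section Jensen
variable {E : Type*} [NormedAddCommGroup E] [InnerProductSpace ℝ E] {N : ℕ}

lemma inner_wsum (w : Fin N → ℝ) (u : Fin N → E) :
    (inner ℝ (∑ j, w j • u j) (∑ j, w j • u j) : ℝ)
      = ∑ j, ∑ j', w j * w j' * inner ℝ (u j) (u j') := by
  rw [sum_inner]
  refine Finset.sum_congr rfl fun j _ => ?_
  rw [real_inner_smul_left, inner_sum, Finset.mul_sum]
  refine Finset.sum_congr rfl fun j' _ => ?_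
  rw [real_inner_smul_right]; ring

lemma jensen_identity (w : Fin N → ℝ) (hw1 : ∑ j, w j = 1) (u : Fin N → E) :
    ∑ j, ∑ j', w j * w j' * ‖u j - u j'‖ ^ 2
      = 2 * (∑ j, w j * ‖u j‖ ^ 2) - 2 * ‖∑ j, w j • u j‖ ^ 2 := by
  have hm : ‖∑ j, w j • u j‖ ^ 2 = ∑ j, ∑ j', w j * w j' * inner ℝ (u j) (u j') := by
    rw [← real_inner_self_eq_norm_sq]; exact inner_wsum w u
  have h1 : ∀ j j', w j * w j' * ‖u j - u j'‖ ^ 2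
      = w j * (w j' * ‖u j‖ ^ 2) + w j * (w j' * ‖u j'‖ ^ 2)
        - 2 * (w j * w j' * inner ℝ (u j) (u j')) := by
    intro j j'
    rw [@norm_sub_sq_real]; ring
  simp_rw [h1, Finset.sum_sub_distrib, Finset.sum_add_distrib, ← Finset.mul_sum,
    ← Finset.sum_mul, hw1]
  rw [hm, Finset.mul_sum]
  ring_nf

end Jensen

section Avg
variable {N n : ℕ}

lemma avg_sq (W : Matrix (Fin N) (Fin N) ℝ) (hDS : DoublyStochastic W)
    (x y : PiLp 2 fun _ : Fin N => EuclideanSpace ℝ (Fin n)) (hy : ∀ i j, y i = y j) :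
    ‖avgMap W x - y‖ ^ 2 = ‖x - y‖ ^ 2
      - (∑ i, ∑ j, ∑ j', W i j * W i j' * ‖(x j - y j) - (x j' - y j')‖ ^ 2) / 2 := by
  obtain ⟨h0, hrow, hcol⟩ := hDS
  set u : Fin N → EuclideanSpace ℝ (Fin n) := fun j => x j - y j with hu
  have hcomp : ∀ i, (avgMap W x - y) i = ∑ j, W i j • u j := by
    intro i
    have hys : ∑ j, W i j • y j = y i := by
      rw [Finset.sum_congr rfl (fun j _ => by rw [hy j i]), ← Finset.sum_smul, hrow i, one_smul]
    have : (avgMap W x - y) i = (∑ j, W i j • x j) - y i := by rw [PiLp.sub_apply]; rfl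
    rw [this, ← hys, ← Finset.sum_sub_distrib]
    exact Finset.sum_congr rfl fun j _ => by rw [hu, smul_sub]
  have key : ∀ i, ‖∑ j, W i j • u j‖ ^ 2
      = (∑ j, W i j * ‖u j‖ ^ 2)
        - (∑ j, ∑ j', W i j * W i j' * ‖u j - u j'‖ ^ 2) / 2 := by
    intro i
    have := jensen_identity (W i) (hrow i) u
    linarith
  have hxy : ‖x - y‖ ^ 2 = ∑ j, ‖u j‖ ^ 2 := by
    rw [PiLp.norm_sq_eq_of_L2]
    rfl
  rw [PiLp.norm_sq_eq_of_L2]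
  simp_rw [hcomp, key]
  rw [Finset.sum_sub_distrib, ← Finset.sum_div, hxy, Finset.sum_comm]
  simp_rw [← Finset.sum_mul, hcol, one_mul]
  rfl

lemma avg_norm_le (W : Matrix (Fin N) (Fin N) ℝ) (hDS : DoublyStochastic W)
    (x y : PiLp 2 fun _ : Fin N => EuclideanSpace ℝ (Fin n)) (hy : ∀ i j, y i = y j) :
    ‖avgMap W x - y‖ ≤ ‖x - y‖ := by
  have hsq := avg_sq W hDS x y hy
  have hnn : 0 ≤ ∑ i, ∑ j, ∑ j', W i j * W i j' * ‖(x j - y j) - (x j' - y j')‖ ^ 2 :=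
    Finset.sum_nonneg fun i _ => Finset.sum_nonneg fun j _ => Finset.sum_nonneg fun j' _ =>
      mul_nonneg (mul_nonneg (hDS.1 i j) (hDS.1 i j')) (sq_nonneg _)
  have h2 : ‖avgMap W x - y‖ ^ 2 ≤ ‖x - y‖ ^ 2 := by rw [hsq]; linarith
  calc ‖avgMap W x - y‖ = Real.sqrt (‖avgMap W x - y‖ ^ 2) := by
        rw [Real.sqrt_sq (norm_nonneg _)]
    _ ≤ Real.sqrt (‖x - y‖ ^ 2) := Real.sqrt_le_sqrt h2
    _ = ‖x - y‖ := Real.sqrt_sq (norm_nonneg _)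

lemma avg_eq_case (W : Matrix (Fin N) (Fin N) ℝ) (hDS : DoublyStochastic W)
    (hpd : ∀ i, 0 < W i i)
    (x y : PiLp 2 fun _ : Fin N => EuclideanSpace ℝ (Fin n)) (hy : ∀ i j, y i = y j)
    (heq : ‖x - y‖ ≤ ‖avgMap W x - y‖) :
    (∀ i j, 0 < W i j → x j = x i) ∧ avgMap W x = x := by
  have hsq := avg_sq W hDS x y hy
  set f : Fin N → Fin N → Fin N → ℝ :=
    fun i j j' => W i j * W i j' * ‖(x j - y j) - (x j' - y j')‖ ^ 2 with hf
  have hfnn : ∀ i j j', 0 ≤ f i j j' := fun i j j' =>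
    mul_nonneg (mul_nonneg (hDS.1 i j) (hDS.1 i j')) (sq_nonneg _)
  have htot : ∑ i, ∑ j, ∑ j', f i j j' = 0 := by
    have hle : ‖avgMap W x - y‖ ^ 2 ≤ ‖x - y‖ ^ 2 := by
      rw [hsq]
      have : 0 ≤ ∑ i, ∑ j, ∑ j', f i j j' :=
        Finset.sum_nonneg fun i _ => Finset.sum_nonneg fun j _ =>
          Finset.sum_nonneg fun j' _ => hfnn i j j'
      linarith
    have hge : ‖x - y‖ ^ 2 ≤ ‖avgMap W x - y‖ ^ 2 :=
      pow_le_pow_left₀ (norm_nonneg _) heq 2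
    have : ‖avgMap W x - y‖ ^ 2 = ‖x - y‖ ^ 2 := le_antisymm hle hge
    rw [this] at hsq
    linarith
  have hterm : ∀ i j j', f i j j' = 0 := by
    intro i j j'
    have h1 := (Finset.sum_eq_zero_iff_of_nonneg (fun i _ =>
      Finset.sum_nonneg fun j _ => Finset.sum_nonneg fun j' _ => hfnn i j j')).1 htot i
      (Finset.mem_univ i)
    have h2 := (Finset.sum_eq_zero_iff_of_nonneg (fun j _ =>
      Finset.sum_nonneg fun j' _ => hfnn i j j')).1 h1 j (Finset.mem_univ j)
    exact (Finset.sum_eq_zero_iff_of_nonneg (fun j' _ => hfnn i j j')).1 h2 j'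
      (Finset.mem_univ j')
  have hedge : ∀ i j, 0 < W i j → x j = x i := by
    intro i j hij
    have := hterm i j i
    rw [hf] at this
    simp only at this
    have hne : W i j * W i i ≠ 0 := ne_of_gt (mul_pos hij (hpd i))
    have h0 : ‖(x j - y j) - (x i - y i)‖ ^ 2 = 0 := by
      rcases mul_eq_zero.1 this with h | h
      · exact absurd h hne
      · exact h
    have : (x j - y j) - (x i - y i) = 0 := by
      rwa [pow_eq_zero_iff (two_ne_zero), norm_eq_zero] at h0
    have hxy : x j - y j = x i - y i := sub_eq_zero.1 this
    rw [hy j i] at hxy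
    exact sub_left_injective hxy
  refine ⟨hedge, PiLp.ext fun i => ?_⟩
  have : ∀ j, W i j • x j = W i j • x i := by
    intro j
    rcases (hDS.1 i j).lt_or_eq with h | h
    · rw [hedge i j h]
    · rw [← h, zero_smul, zero_smul]
  show ∑ j, W i j • x j = x i
  rw [Finset.sum_congr rfl fun j _ => this j, ← Finset.sum_smul, hDS.2.1 i, one_smul]

lemma avg_continuous (W : Matrix (Fin N) (Fin N) ℝ) (hDS : DoublyStochastic W) :
    Continuous (avgMap (n := n) W) := by
  have hlin : ∀ a b : PiLp 2 fun _ : Fin N => EuclideanSpace ℝ (Fin n),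
      avgMap W a - avgMap W b = avgMap W (a - b) := by
    intro a b
    refine PiLp.ext fun i => ?_
    rw [PiLp.sub_apply]
    show (∑ j, W i j • a j) - (∑ j, W i j • b j) = ∑ j, W i j • (a - b) j
    rw [← Finset.sum_sub_distrib]
    exact Finset.sum_congr rfl fun j _ => by rw [PiLp.sub_apply, smul_sub]
  have hle : ∀ v : PiLp 2 fun _ : Fin N => EuclideanSpace ℝ (Fin n), ‖avgMap W v‖ ≤ ‖v‖ := by
    intro v
    have := avg_norm_le W hDS v 0 (fun _ _ => rfl)
    simpa using this
  refine (LipschitzWith.of_dist_le_mul (K := 1) fun a b => ?_).continuous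
  rw [dist_eq_norm, dist_eq_norm, hlin]
  simpa using hle _

lemma avg_fix_consensus (W : Matrix (Fin N) (Fin N) ℝ) (hrow : ∀ i, ∑ j, W i j = 1)
    (x : PiLp 2 fun _ : Fin N => EuclideanSpace ℝ (Fin n)) (hx : ∀ i j, x i = x j) :
    avgMap W x = x := by
  refine PiLp.ext fun i => ?_
  show ∑ j, W i j • x j = x i
  rw [Finset.sum_congr rfl fun j _ => by rw [hx j i], ← Finset.sum_smul, hrow i, one_smul]

end Avg

lemma para_norm_le {E : Type*} [NormedAddCommGroup E] {M : E → E}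
    (h : Paracontraction M) {y : E} (hy : M y = y) (x : E) : ‖M x - y‖ ≤ ‖x - y‖ := by
  by_cases hx : M x = x
  · rw [hx]
  · exact (h.2 x y hx hy).le

lemma para_fix_of_norm_ge {E : Type*} [NormedAddCommGroup E] {M : E → E}
    (h : Paracontraction M) {y : E} (hy : M y = y) (x : E) (hge : ‖x - y‖ ≤ ‖M x - y‖) :
    M x = x := by
  by_contra hx
  exact absurd (h.2 x y hx hy) (not_lt.2 hge)

/-- Theorem 2 (Convergence of the distributed bargaining protocol). -/
theorem bargaining_convergence
    (N Q : ℕ) (hN : 1 ≤ N) (hQ : 1 ≤ Q)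
    (𝒱 : Set (Finset (Fin N) → ℝ)) (h𝒱fin : 𝒱.Finite) (h𝒱ne : 𝒱.Nonempty)
    (C₀ : Set (EuclideanSpace ℝ (Fin N))) (hC₀ : C₀ = ⋂ v ∈ 𝒱, core v)
    (hC₀ne : C₀.Nonempty)
    (ℳ : Set (XSp N → XSp N)) (hℳfin : ℳ.Finite)
    (hℳpara : ∀ M ∈ ℳ, Paracontraction M)
    (hℳfix : (⋂ M ∈ ℳ, Function.fixedPoints M) = {x : XSp N | ∀ i, x i ∈ C₀})
    (𝒲 : Set (Matrix (Fin N) (Fin N) ℝ)) (h𝒲fin : 𝒲.Finite)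
    (h𝒲 : ∀ W ∈ 𝒲, DoublyStochastic W ∧ ∀ i, 0 < W i i)
    (M : ℕ → (XSp N → XSp N)) (hM : ∀ k, M k ∈ ℳ)
    (hMQ : ∀ n : ℕ, {U | ∃ l ≤ Q, M (n + l) = U} = ℳ)
    (W : ℕ → Matrix (Fin N) (Fin N) ℝ) (hW : ∀ k, W k ∈ 𝒲)
    (hWconn : ∀ k : ℕ, StronglyConnected
      {p : Fin N × Fin N | ∃ l, 1 ≤ l ∧ l ≤ Q ∧ 0 < W (k + l) p.1 p.2})
    (x : ℕ → XSp N) (x0 : XSp N) (hx0 : x 0 = x0)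
    (hiter : ∀ k, x (k + 1) = M k (avgMap (W k) (x k))) :
    ∃ xb : XSp N, Filter.Tendsto x Filter.atTop (nhds xb) ∧
      (∀ i j, xb i = xb j) ∧ (∀ i, xb i ∈ C₀) := by
  classical
  haveI := hℳfin.to_subtype
  haveI := h𝒲fin.to_subtype
  obtain ⟨c, hc⟩ := hC₀ne
  set y : XSp N := WithLp.toLp 2 fun _ => c with hydef
  have hycons : ∀ i j, y i = y j := fun _ _ => rfl
  have hyC : ∀ i, y i ∈ C₀ := fun _ => hc
  have hfixset : ∀ z : XSp N, (∀ i, z i ∈ C₀) → ∀ M' ∈ ℳ, M' z = z := by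
    intro z hz M' hM'
    have hzmem : z ∈ ⋂ M'' ∈ ℳ, Function.fixedPoints M'' := by
      rw [hℳfix]; exact hz
    exact Set.mem_iInter₂.1 hzmem M' hM'
  have hyM : ∀ M' ∈ ℳ, M' y = y := hfixset y hyC
  have hDSk : ∀ k, DoublyStochastic (W k) := fun k => (h𝒲 (W k) (hW k)).1
  -- central equality-case lemma
  have hcore : ∀ M₀ ∈ ℳ, ∀ W₀ ∈ 𝒲, ∀ w : XSp N,
      ‖w - y‖ ≤ ‖M₀ (avgMap W₀ w) - y‖ →
      (∀ i j, 0 < W₀ i j → w j = w i) ∧ avgMap W₀ w = w ∧ M₀ w = w := by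
    intro M₀ hM₀ W₀ hW₀ w hge
    obtain ⟨hds, hpd⟩ := h𝒲 W₀ hW₀
    have h1 : ‖M₀ (avgMap W₀ w) - y‖ ≤ ‖avgMap W₀ w - y‖ :=
      para_norm_le (hℳpara M₀ hM₀) (hyM M₀ hM₀) _
    have hgeavg : ‖w - y‖ ≤ ‖avgMap W₀ w - y‖ := le_trans hge h1
    obtain ⟨hedge, hafix⟩ := avg_eq_case W₀ hds hpd w y hycons hgeavg
    have hMfix : M₀ w = w := by
      apply para_fix_of_norm_ge (hℳpara M₀ hM₀) (hyM M₀ hM₀)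
      calc ‖w - y‖ ≤ ‖M₀ (avgMap W₀ w) - y‖ := hge
        _ = ‖M₀ w - y‖ := by rw [hafix]
    exact ⟨hedge, hafix, hMfix⟩
  -- Fejér monotonicity
  have hfejer : ∀ q : XSp N, (∀ i j, q i = q j) → (∀ i, q i ∈ C₀) →
      ∀ k, ‖x (k + 1) - q‖ ≤ ‖x k - q‖ := by
    intro q hqcons hqC k
    rw [hiter k]
    calc ‖M k (avgMap (W k) (x k)) - q‖ ≤ ‖avgMap (W k) (x k) - q‖ :=
          para_norm_le (hℳpara _ (hM k)) (hfixset q hqC _ (hM k)) _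
      _ ≤ ‖x k - q‖ := avg_norm_le (W k) (hDSk k) _ q hqcons
  set d : ℕ → ℝ := fun k => ‖x k - y‖ with hddef
  have hanti : Antitone d := antitone_nat_of_succ_le (fun k => hfejer y hycons hyC k)
  have hbdd : BddBelow (Set.range d) := ⟨0, by rintro _ ⟨k, rfl⟩; exact norm_nonneg _⟩
  set δ : ℝ := ⨅ k, d k with hδdef
  have hdtend : Tendsto d atTop (𝓝 δ) := tendsto_atTop_ciInf hanti hbdd
  have hball : ∀ k, x k ∈ Metric.closedBall y (d 0) := by
    intro k; rw [Metric.mem_closedBall, dist_eq_norm]; exact hanti (Nat.zero_le k)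
  obtain ⟨z, -, φ, hφ, hφtend⟩ :=
    tendsto_subseq_of_bounded Metric.isBounded_closedBall hball
  have hnormtend : ∀ ψ : ℕ → ℕ, Tendsto ψ atTop atTop → ∀ w : XSp N,
      Tendsto (fun j => x (ψ j)) atTop (𝓝 w) → ‖w - y‖ = δ := by
    intro ψ hψ w hw
    have h1 : Tendsto (fun j => d (ψ j)) atTop (𝓝 δ) := hdtend.comp hψ
    have h2 : Tendsto (fun j => d (ψ j)) atTop (𝓝 ‖w - y‖) := (hw.sub_const y).norm
    exact tendsto_nhds_unique h2 h1
  have hzy : ‖z - y‖ = δ := hnormtend φ hφ.tendsto_atTop z hφtend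
  -- the key step lemma
  have hstepfix : ∀ ψ : ℕ → ℕ, Tendsto ψ atTop atTop →
      ∀ M₀ ∈ ℳ, ∀ W₀ ∈ 𝒲, (∀ j, M (ψ j) = M₀ ∧ W (ψ j) = W₀) →
      Tendsto (fun j => x (ψ j)) atTop (𝓝 z) →
      (∀ i j, 0 < W₀ i j → z j = z i) ∧ avgMap W₀ z = z ∧ M₀ z = z ∧
        Tendsto (fun j => x (ψ j + 1)) atTop (𝓝 z) := by
    intro ψ hψ M₀ hM₀ W₀ hW₀ hcst htend
    have hcont : Continuous (fun v => M₀ (avgMap W₀ v)) :=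
      ((hℳpara M₀ hM₀).1).comp (avg_continuous W₀ (h𝒲 W₀ hW₀).1)
    have heq : (fun j => x (ψ j + 1)) = fun j => M₀ (avgMap W₀ (x (ψ j))) := by
      funext j; rw [hiter (ψ j), (hcst j).1, (hcst j).2]
    have htend1 : Tendsto (fun j => x (ψ j + 1)) atTop (𝓝 (M₀ (avgMap W₀ z))) := by
      rw [heq]; exact (hcont.tendsto z).comp htend
    have hψ1 : Tendsto (fun j => ψ j + 1) atTop atTop :=
      tendsto_atTop_mono (fun j => Nat.le_succ (ψ j)) hψ
    have hnorm1 : ‖M₀ (avgMap W₀ z) - y‖ = δ := hnormtend _ hψ1 _ htend1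
    have hge : ‖z - y‖ ≤ ‖M₀ (avgMap W₀ z) - y‖ := by rw [hzy, hnorm1]
    obtain ⟨hedge, hafix, hMfix⟩ := hcore M₀ hM₀ W₀ hW₀ z hge
    have hMz : M₀ (avgMap W₀ z) = z := by rw [hafix, hMfix]
    exact ⟨hedge, hafix, hMfix, hMz ▸ htend1⟩
  -- pigeonhole helper
  have hpigeon : ∀ g : ℕ → ℕ, ∃ M₀ ∈ ℳ, ∃ W₀ ∈ 𝒲,
      ∃ᶠ n in atTop, M (g n) = M₀ ∧ W (g n) = W₀ := by
    intro g
    obtain ⟨⟨⟨M₀, hM₀⟩, ⟨W₀, hW₀⟩⟩, hfib⟩ := Finite.exists_infinite_fiber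
      (fun n => ((⟨M (g n), hM _⟩ : ℳ), (⟨W (g n), hW _⟩ : 𝒲)))
    refine ⟨M₀, hM₀, W₀, hW₀, ?_⟩
    rw [Nat.frequently_atTop_iff_infinite]
    rw [Set.infinite_coe_iff] at hfib
    apply Set.Infinite.mono _ hfib
    intro n hn
    simp only [Set.mem_preimage, Set.mem_singleton_iff, Prod.mk.injEq, Subtype.mk.injEq] at hn
    exact hn
  -- shift lemma
  have hshift : ∀ ψ : ℕ → ℕ, Tendsto ψ atTop atTop →
      Tendsto (fun j => x (ψ j)) atTop (𝓝 z) →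
      Tendsto (fun j => x (ψ j + 1)) atTop (𝓝 z) := by
    intro ψ hψ htend
    apply tendsto_of_subseq_tendsto
    intro ns hns
    obtain ⟨M₀, hM₀, W₀, hW₀, hfreq⟩ := hpigeon (fun n => ψ (ns n))
    obtain ⟨ms, hms, hmseq⟩ := extraction_of_frequently_atTop hfreq
    refine ⟨ms, ?_⟩
    have hψ' : Tendsto (fun n => ψ (ns (ms n))) atTop atTop :=
      hψ.comp (hns.comp hms.tendsto_atTop)
    have htend' : Tendsto (fun n => x (ψ (ns (ms n)))) atTop (𝓝 z) :=
      htend.comp (hns.comp hms.tendsto_atTop)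
    exact (hstepfix _ hψ' M₀ hM₀ W₀ hW₀ hmseq htend').2.2.2
  -- every shifted subsequence converges to z
  have hlevel2 : ∀ l : ℕ, Tendsto (fun j => x (φ j + l)) atTop (𝓝 z) := by
    intro l
    induction l with
    | zero => exact hφtend
    | succ l ih =>
        exact hshift (fun j => φ j + l)
          (tendsto_atTop_mono (fun j => Nat.le_add_right _ _) hφ.tendsto_atTop) ih
  -- z is a common fixed point of ℳ
  have hMz : ∀ M₀ ∈ ℳ, M₀ z = z := by
    intro M₀ hM₀
    have hchoice : ∀ j : ℕ, ∃ l ≤ Q, M (φ j + l) = M₀ := by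
      intro j
      have : M₀ ∈ {U | ∃ l ≤ Q, M (φ j + l) = U} := by rw [hMQ (φ j)]; exact hM₀
      exact this
    choose L hLle hLeq using hchoice
    obtain ⟨⟨l0, W₀s⟩, hfib⟩ := Finite.exists_infinite_fiber
      (fun j => ((⟨L j, Nat.lt_succ_of_le (hLle j)⟩ : Fin (Q + 1)),
        (⟨W (φ j + L j), hW _⟩ : 𝒲)))
    obtain ⟨W₀, hW₀⟩ := W₀s
    have hfreq : ∃ᶠ j in atTop, L j = l0.val ∧ W (φ j + L j) = W₀ := by
      rw [Nat.frequently_atTop_iff_infinite]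
      rw [Set.infinite_coe_iff] at hfib
      apply Set.Infinite.mono _ hfib
      intro n hn
      simp only [Set.mem_preimage, Set.mem_singleton_iff, Prod.mk.injEq,
        Subtype.mk.injEq] at hn
      exact ⟨congrArg Fin.val hn.1, hn.2⟩
    obtain ⟨σ, hσ, hσeq⟩ := extraction_of_frequently_atTop hfreq
    set ψ : ℕ → ℕ := fun n => φ (σ n) + l0.val with hψdef
    have hψtop : Tendsto ψ atTop atTop :=
      tendsto_atTop_mono (fun n => Nat.le_add_right _ _) (hφ.comp hσ).tendsto_atTop
    have hcst : ∀ n, M (ψ n) = M₀ ∧ W (ψ n) = W₀ := by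
      intro n
      have h1 := hσeq n
      constructor
      · rw [hψdef]; simp only [← h1.1]; exact hLeq (σ n)
      · rw [hψdef]; simp only [← h1.1]; exact h1.2
    have htend' : Tendsto (fun n => x (ψ n)) atTop (𝓝 z) :=
      (hlevel2 l0.val).comp hσ.tendsto_atTop
    exact (hstepfix ψ hψtop M₀ hM₀ W₀ hW₀ hcst htend').2.2.1
  have hzC : ∀ i, z i ∈ C₀ := by
    have hz : z ∈ ⋂ M' ∈ ℳ, Function.fixedPoints M' :=
      Set.mem_iInter₂.2 fun M' hM' => hMz M' hM'
    rw [hℳfix] at hz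
    exact hz
  -- consensus
  have hcons : ∀ i j, z i = z j := by
    obtain ⟨t, hfib⟩ := Finite.exists_infinite_fiber
      (fun j => (fun l : Fin Q =>
        ((⟨M (φ j + 1 + l.val), hM _⟩ : ℳ), (⟨W (φ j + 1 + l.val), hW _⟩ : 𝒲))))
    have hfreq : ∃ᶠ j in atTop, ∀ l : Fin Q,
        M (φ j + 1 + l.val) = ((t l).1 : XSp N → XSp N) ∧
        W (φ j + 1 + l.val) = ((t l).2 : Matrix (Fin N) (Fin N) ℝ) := by
      rw [Nat.frequently_atTop_iff_infinite]
      rw [Set.infinite_coe_iff] at hfib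
      apply Set.Infinite.mono _ hfib
      intro n hn
      simp only [Set.mem_preimage, Set.mem_singleton_iff] at hn
      intro l
      have := congrFun hn l
      rw [Prod.ext_iff] at this
      exact ⟨congrArg Subtype.val this.1, congrArg Subtype.val this.2⟩
    obtain ⟨σ, hσ, hσeq⟩ := extraction_of_frequently_atTop hfreq
    have hedge : ∀ l : Fin Q, ∀ a b, 0 < ((t l).2 : Matrix (Fin N) (Fin N) ℝ) a b →
        z b = z a := by
      intro l
      set ψ : ℕ → ℕ := fun n => φ (σ n) + 1 + l.val with hψdef
      have hψtop : Tendsto ψ atTop atTop := by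
        apply tendsto_atTop_mono (fun n => ?_) (hφ.comp hσ).tendsto_atTop
        show φ (σ n) ≤ φ (σ n) + 1 + l.val
        omega
      have hcst : ∀ n, M (ψ n) = ((t l).1 : XSp N → XSp N) ∧
          W (ψ n) = ((t l).2 : Matrix (Fin N) (Fin N) ℝ) := fun n => hσeq n l
      have htend' : Tendsto (fun n => x (ψ n)) atTop (𝓝 z) := by
        have := (hlevel2 (1 + l.val)).comp hσ.tendsto_atTop
        have heq : ((fun j => x (φ j + (1 + l.val))) ∘ σ) = fun n => x (ψ n) := by
          funext n
          simp only [Function.comp_apply, hψdef, ← add_assoc]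
        rwa [heq] at this
      exact (hstepfix ψ hψtop _ (t l).1.2 _ (t l).2.2 hcst htend').1
    intro i j
    have hconn := hWconn (φ (σ 0)) i j
    induction hconn with
    | refl => rfl
    | tail hstep hmem ih =>
        obtain ⟨l, hl1, hlQ, hpos⟩ := hmem
        have hidx : φ (σ 0) + l = φ (σ 0) + 1 + (l - 1) := by omega
        rw [hidx] at hpos
        have hWeq := (hσeq 0 ⟨l - 1, by omega⟩).2
        rw [hWeq] at hpos
        have := hedge ⟨l - 1, by omega⟩ _ _ hpos
        exact ih.trans this.symm
  -- final convergence
  have hanti2 : Antitone fun k => ‖x k - z‖ :=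
    antitone_nat_of_succ_le (fun k => hfejer z hcons hzC k)
  have hbdd2 : BddBelow (Set.range fun k => ‖x k - z‖) :=
    ⟨0, by rintro _ ⟨k, rfl⟩; exact norm_nonneg _⟩
  have htend2 : Tendsto (fun k => ‖x k - z‖) atTop (𝓝 (⨅ k, ‖x k - z‖)) :=
    tendsto_atTop_ciInf hanti2 hbdd2
  have hsub0 : Tendsto (fun j => ‖x (φ j) - z‖) atTop (𝓝 0) := by
    have := (hφtend.sub_const z).norm
    simpa using this
  have hsubI : Tendsto (fun j => ‖x (φ j) - z‖) atTop (𝓝 (⨅ k, ‖x k - z‖)) :=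
    htend2.comp hφ.tendsto_atTop
  have hI0 : (⨅ k, ‖x k - z‖) = 0 := tendsto_nhds_unique hsubI hsub0
  have hfinal : Tendsto x atTop (𝓝 z) := by
    rw [tendsto_iff_norm_sub_tendsto_zero]
    rw [hI0] at htend2
    exact htend2
  exact ⟨z, hfinal, hcons, hzC⟩
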